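/- Let T : Θ × S → ℝ^d be a pivot: the sampling density of T(θ, S_n) given θ = θ₀ is g(t), free of θ. Suppose the accept–reject joint density of (θ', s') is proportional to r_n(θ') f_n(s'|θ') K_ε(s' − s_obs), the map s ↦ T(θ, s) is a diffeomorphism for each θ with inverse s_{t,θ} and Jacobian factor satisfying f_n(s_{t,θ}|θ)|∂_s T(θ, s_{t,θ})|^{-1} = g(t), and ∫ r_n(θ) K_ε(s_{t,θ} − s_obs) dθ = C for a constant C free of t. Then the conditional density of T(θ_ACC, s') given acceptance is exactly g(t), so the Monte-Carlo law of T(θ_ACC, S_n) given S_n = s_obs equals the sampling law of T(θ, S_n) given θ = θ₀. -/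

import Mathlib

open MeasureTheory Set

namespace ExactPivotAux

noncomputable def trunc {d : ℕ} (f : (Fin d → ℝ) → ℝ) (n : ℕ) : (Fin d → ℝ) → ℝ :=
  (Metric.closedBall (0 : Fin d → ℝ) n).indicator (fun x => min (f x) n)

lemma trunc_nonneg {d : ℕ} {f : (Fin d → ℝ) → ℝ} (hf : ∀ x, 0 ≤ f x) (n : ℕ) (x) :
    0 ≤ trunc f n x := by
  unfold trunc
  by_cases hx : x ∈ Metric.closedBall (0 : Fin d → ℝ) n <;>
    simp [Set.indicator_apply, hx, le_min_iff, hf x]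

lemma trunc_le {d : ℕ} {f : (Fin d → ℝ) → ℝ} (hf : ∀ x, 0 ≤ f x) (n : ℕ) (x) :
    trunc f n x ≤ f x := by
  unfold trunc
  by_cases hx : x ∈ Metric.closedBall (0 : Fin d → ℝ) n <;>
    simp [Set.indicator_apply, hx, min_le_left, hf x]

lemma trunc_meas {d : ℕ} {f : (Fin d → ℝ) → ℝ} (hf : Measurable f) (n : ℕ) :
    Measurable (trunc f n) :=
  (hf.min measurable_const).indicator measurableSet_closedBall

lemma trunc_integrable {d : ℕ} {f : (Fin d → ℝ) → ℝ} (hf : Measurable f)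
    (hf0 : ∀ x, 0 ≤ f x) (n : ℕ) : Integrable (trunc f n) := by
  have hB : MeasurableSet (Metric.closedBall (0 : Fin d → ℝ) n) :=
    measurableSet_closedBall
  have hg : Integrable ((Metric.closedBall (0 : Fin d → ℝ) n).indicator
      (fun _ => (n : ℝ))) := by
    rw [integrable_indicator_iff hB]
    exact integrableOn_const measure_closedBall_lt_top.ne
  refine hg.mono' (trunc_meas hf n).aestronglyMeasurable (ae_of_all _ fun x => ?_)
  rw [Real.norm_eq_abs, abs_of_nonneg (trunc_nonneg hf0 n x)]
  unfold trunc
  by_cases hx : x ∈ Metric.closedBall (0 : Fin d → ℝ) n <;>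
    simp [Set.indicator_apply, hx, min_le_right]

lemma trunc_mono {d : ℕ} {f : (Fin d → ℝ) → ℝ} (hf0 : ∀ x, 0 ≤ f x) :
    Monotone fun n x => trunc f n x := by
  intro n m hnm
  intro x
  show trunc f n x ≤ trunc f m x
  unfold trunc
  by_cases hx : x ∈ Metric.closedBall (0 : Fin d → ℝ) n
  · have hx' : x ∈ Metric.closedBall (0 : Fin d → ℝ) m :=
      Metric.closedBall_subset_closedBall (by exact_mod_cast hnm) hx
    rw [Set.indicator_of_mem hx, Set.indicator_of_mem hx']
    exact min_le_min le_rfl (by exact_mod_cast hnm)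
  · rw [Set.indicator_of_notMem hx]
    by_cases hx' : x ∈ Metric.closedBall (0 : Fin d → ℝ) m
    · rw [Set.indicator_of_mem hx']
      exact le_min (hf0 x) (by positivity)
    · rw [Set.indicator_of_notMem hx']

lemma trunc_sup {d : ℕ} {f : (Fin d → ℝ) → ℝ} (hf0 : ∀ x, 0 ≤ f x) (x) :
    (⨆ n, ENNReal.ofReal (trunc f n x)) = ENNReal.ofReal (f x) := by
  apply le_antisymm
  · exact iSup_le fun n => ENNReal.ofReal_le_ofReal (trunc_le hf0 n x)
  · set N : ℕ := ⌈max (f x) ‖x‖⌉₊ with hN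
    have hxN : x ∈ Metric.closedBall (0 : Fin d → ℝ) N := by
      rw [Metric.mem_closedBall, dist_zero_right]
      exact le_trans (le_max_right _ _) (Nat.le_ceil _)
    have hfN : f x ≤ (N : ℝ) := le_trans (le_max_left _ _) (Nat.le_ceil _)
    have : trunc f N x = f x := by
      unfold trunc
      simp [Set.indicator_apply, hxN, min_eq_left hfN]
    exact le_iSup_of_le N (by rw [this])

lemma lintegral_trunc {d : ℕ} {f : (Fin d → ℝ) → ℝ} (hf : Measurable f)
    (hf0 : ∀ x, 0 ≤ f x) :
    ∫⁻ x, ENNReal.ofReal (f x) = ⨆ n, ∫⁻ x, ENNReal.ofReal (trunc f n x) := by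
  have h1 : ∀ x, ENNReal.ofReal (f x) = ⨆ n, ENNReal.ofReal (trunc f n x) :=
    fun x => (trunc_sup hf0 x).symm
  simp_rw [h1]
  exact lintegral_iSup (fun n => (trunc_meas hf n).ennreal_ofReal)
    (fun n m hnm x => ENNReal.ofReal_le_ofReal (trunc_mono hf0 hnm x))

lemma ofReal_integral_le {α : Type*} [MeasurableSpace α] {μ : Measure α} {f : α → ℝ}
    (hf : ∀ x, 0 ≤ f x) :
    ENNReal.ofReal (∫ x, f x ∂μ) ≤ ∫⁻ x, ENNReal.ofReal (f x) ∂μ := by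
  by_cases hi : Integrable f μ
  · exact le_of_eq (MeasureTheory.ofReal_integral_eq_lintegral_ofReal hi (ae_of_all _ hf))
  · rw [integral_undef hi]
    simp

end ExactPivotAux
namespace ExactPivotAux

lemma cov_lintegral {p d : ℕ}
    (T : (Fin p → ℝ) → (Fin d → ℝ) → (Fin d → ℝ))
    (sInv : (Fin p → ℝ) → (Fin d → ℝ) → (Fin d → ℝ))
    (J : (Fin p → ℝ) → (Fin d → ℝ) → ℝ) (θ : Fin p → ℝ)
    (hT : Measurable (T θ))
    (hJ : ∀ t, 0 ≤ J θ t)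
    (hInv₁ : ∀ t, T θ (sInv θ t) = t)
    (hCOV : ∀ h : (Fin d → ℝ) → ℝ, Measurable h → (∀ s, 0 ≤ h s) →
      (∫ s, h s) = ∫ t, h (sInv θ t) * J θ t)
    (h φ : (Fin d → ℝ) → ℝ) (hh : Measurable h) (hh0 : ∀ s, 0 ≤ h s)
    (hφ : Measurable φ) (hφ0 : ∀ t, 0 ≤ φ t)
    (hrel : ∀ t, h (sInv θ t) * J θ t = φ t) :
    ∫⁻ s, ENNReal.ofReal (h s) = ∫⁻ t, ENNReal.ofReal (φ t) := by
  apply le_antisymm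
  · rw [lintegral_trunc hh hh0]
    refine iSup_le fun n => ?_
    have h1 : ∫⁻ x, ENNReal.ofReal (trunc h n x) = ENNReal.ofReal (∫ x, trunc h n x) :=
      (MeasureTheory.ofReal_integral_eq_lintegral_ofReal (trunc_integrable hh hh0 n)
        (ae_of_all _ (trunc_nonneg hh0 n))).symm
    rw [h1, hCOV _ (trunc_meas hh n) (trunc_nonneg hh0 n)]
    calc ENNReal.ofReal (∫ t, trunc h n (sInv θ t) * J θ t)
        ≤ ∫⁻ t, ENNReal.ofReal (trunc h n (sInv θ t) * J θ t) :=
          ofReal_integral_le (fun t => mul_nonneg (trunc_nonneg hh0 n _) (hJ t))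
      _ ≤ ∫⁻ t, ENNReal.ofReal (φ t) := lintegral_mono fun t =>
          ENNReal.ofReal_le_ofReal (by
            rw [← hrel t]
            exact mul_le_mul_of_nonneg_right (trunc_le hh0 n _) (hJ t))
  · rw [lintegral_trunc hφ hφ0]
    refine iSup_le fun n => ?_
    set hn : (Fin d → ℝ) → ℝ := fun s => h s * (trunc φ n (T θ s) / φ (T θ s)) with hhn
    have hn_meas : Measurable hn :=
      hh.mul (((trunc_meas hφ n).comp hT).div (hφ.comp hT))
    have hn0 : ∀ s, 0 ≤ hn s := fun s =>
      mul_nonneg (hh0 s) (div_nonneg (trunc_nonneg hφ0 n _) (hφ0 _))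
    have key : ∀ t, hn (sInv θ t) * J θ t = trunc φ n t := by
      intro t
      simp only [hhn, hInv₁ t]
      rcases eq_or_ne (φ t) 0 with h0 | h0
      · have htr : trunc φ n t = 0 := by
          unfold trunc
          by_cases hx : t ∈ Metric.closedBall (0 : Fin d → ℝ) n
          · rw [Set.indicator_of_mem hx, h0]
            exact min_eq_left (by positivity)
          · rw [Set.indicator_of_notMem hx]
        rw [htr, h0, div_zero, mul_zero, zero_mul]
      · rw [mul_right_comm, hrel t, mul_comm (φ t), div_mul_cancel₀ _ h0]
    have h2 : ∫⁻ t, ENNReal.ofReal (trunc φ n t) = ENNReal.ofReal (∫ t, trunc φ n t) :=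
      (MeasureTheory.ofReal_integral_eq_lintegral_ofReal (trunc_integrable hφ hφ0 n)
        (ae_of_all _ (trunc_nonneg hφ0 n))).symm
    have h3 : (∫ t, trunc φ n t) = ∫ s, hn s := by
      rw [hCOV hn hn_meas hn0]
      exact integral_congr_ae (ae_of_all _ fun t => (key t).symm)
    rw [h2, h3]
    calc ENNReal.ofReal (∫ s, hn s) ≤ ∫⁻ s, ENNReal.ofReal (hn s) :=
          ofReal_integral_le hn0
      _ ≤ ∫⁻ s, ENNReal.ofReal (h s) := lintegral_mono fun s =>
          ENNReal.ofReal_le_ofReal (by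
            have hc1 : trunc φ n (T θ s) / φ (T θ s) ≤ 1 := by
              rcases eq_or_ne (φ (T θ s)) 0 with h0 | h0
              · rw [h0, div_zero]; exact zero_le_one
              · rw [div_le_one (lt_of_le_of_ne (hφ0 _) (Ne.symm h0))]
                exact trunc_le hφ0 n _
            calc hn s ≤ h s * 1 := mul_le_mul_of_nonneg_left hc1 (hh0 s)
              _ = h s := mul_one _)

end ExactPivotAux

open ExactPivotAux

/-- Theorem 1 (exact-pivot version). Let `T : Θ × S → ℝ^d` be a pivot: for each `θ`,
`s ↦ T θ s` is a diffeomorphism with inverse `t ↦ sInv θ t` and Jacobian factor `J θ t`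
(expressed through the change-of-variables hypothesis `hCOV`), and the density
transformation `f_n(s_{t,θ}|θ) · J(θ,t) = g(t)` holds with `g` free of `θ`.  If the
normalizing integral `∫ r_n(θ) K(s_{t,θ} − s_obs) dθ = C` is free of `t`, then the
(unnormalized) accept–reject mass of the event `{T(θ', s') ∈ A}` equals `C ∫_A g`:
the Monte-Carlo law of the pivot given `S_n = s_obs` is exactly its sampling law `g`. -/
theorem exact_pivot_matching
    {p d : ℕ}
    (T : (Fin p → ℝ) → (Fin d → ℝ) → (Fin d → ℝ))
    (sInv : (Fin p → ℝ) → (Fin d → ℝ) → (Fin d → ℝ))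
    (J : (Fin p → ℝ) → (Fin d → ℝ) → ℝ)
    (fn : (Fin p → ℝ) → (Fin d → ℝ) → ℝ)   -- `fn θ s = f_n(s | θ)`
    (rn : (Fin p → ℝ) → ℝ) (K : (Fin d → ℝ) → ℝ)
    (g : (Fin d → ℝ) → ℝ)
    (sobs : Fin d → ℝ) (C : ℝ)
    (hT_meas : Measurable fun q : (Fin p → ℝ) × (Fin d → ℝ) => T q.1 q.2)
    (hsInv_meas : Measurable fun q : (Fin p → ℝ) × (Fin d → ℝ) => sInv q.1 q.2)
    (hJ_nonneg : ∀ θ t, 0 ≤ J θ t)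
    (hfn_nonneg : ∀ θ s, 0 ≤ fn θ s) (hfn_meas : Measurable fun q : _ × _ => fn q.1 q.2)
    (hrn_nonneg : ∀ θ, 0 ≤ rn θ) (hrn_meas : Measurable rn)
    (hK_nonneg : ∀ u, 0 ≤ K u) (hK_meas : Measurable K)
    (hg_nonneg : ∀ t, 0 ≤ g t) (hg_meas : Measurable g)
    -- `sInv θ` is the inverse of `T θ`
    (hInv₁ : ∀ θ t, T θ (sInv θ t) = t)
    (hInv₂ : ∀ θ s, sInv θ (T θ s) = s)
    -- change of variables for `s ↦ T θ s` with Jacobian factor `J`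
    (hCOV : ∀ (θ : Fin p → ℝ) (h : (Fin d → ℝ) → ℝ), Measurable h → (∀ s, 0 ≤ h s) →
      (∫ s, h s) = ∫ t, h (sInv θ t) * J θ t)
    -- the pivot density relation: `f_n(s_{t,θ}|θ) |∂ₛT|⁻¹ = g(t)`, `g` free of `θ`
    (hJac : ∀ θ t, fn θ (sInv θ t) * J θ t = g t)
    -- requirement (8): the normalizing integral is a constant free of `t`
    (hC : ∀ t, (∫ θ, rn θ * K (sInv θ t - sobs)) = C) :
    ∀ A : Set (Fin d → ℝ), MeasurableSet A →
      (∫ q : (Fin p → ℝ) × (Fin d → ℝ),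
          ({q : (Fin p → ℝ) × (Fin d → ℝ) | T q.1 q.2 ∈ A}).indicator
            (fun q => rn q.1 * fn q.1 q.2 * K (q.2 - sobs)) q)
        = C * ∫ t in A, g t := by

  intro A hA
  -- notation
  have hC0 : 0 ≤ C := by
    rw [← hC 0]
    exact integral_nonneg fun θ => mul_nonneg (hrn_nonneg θ) (hK_nonneg _)
  set F : (Fin p → ℝ) × (Fin d → ℝ) → ℝ := fun q =>
    ({q : (Fin p → ℝ) × (Fin d → ℝ) | T q.1 q.2 ∈ A}).indicator
      (fun q => rn q.1 * fn q.1 q.2 * K (q.2 - sobs)) q with hF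
  have hS : MeasurableSet {q : (Fin p → ℝ) × (Fin d → ℝ) | T q.1 q.2 ∈ A} := hT_meas hA
  have hF_meas : Measurable F :=
    (((hrn_meas.comp measurable_fst).mul hfn_meas).mul
      (hK_meas.comp (measurable_snd.sub measurable_const))).indicator hS
  have hF0 : ∀ q, 0 ≤ F q := fun q => Set.indicator_nonneg
    (fun q _ => mul_nonneg (mul_nonneg (hrn_nonneg _) (hfn_nonneg _ _)) (hK_nonneg _)) q
  have hFeq : ∀ θ s, F (θ, s) =
      A.indicator (fun _ => (1 : ℝ)) (T θ s) * (rn θ * fn θ s * K (s - sobs)) := by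
    intro θ s
    by_cases hmem : T θ s ∈ A <;>
      simp [hF, Set.indicator_apply, hmem]
  -- the θ-section integrand after change of variables
  set ψ : (Fin p → ℝ) → (Fin d → ℝ) → ℝ := fun θ t =>
    (A.indicator (fun _ => (1 : ℝ)) t * g t) * (rn θ * K (sInv θ t - sobs)) with hψ
  have hψ0 : ∀ θ t, 0 ≤ ψ θ t := fun θ t =>
    mul_nonneg (mul_nonneg (Set.indicator_nonneg (fun _ _ => zero_le_one) t) (hg_nonneg t))
      (mul_nonneg (hrn_nonneg θ) (hK_nonneg _))
  have hψ_measp : Measurable fun q : (Fin p → ℝ) × (Fin d → ℝ) => ψ q.1 q.2 := by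
    apply Measurable.mul
    · exact ((measurable_const.indicator hA).mul hg_meas).comp measurable_snd
    · exact (hrn_meas.comp measurable_fst).mul
        (hK_meas.comp ((hsInv_meas).sub measurable_const))
  -- H t
  set H : (Fin d → ℝ) → ENNReal := fun t =>
    ∫⁻ θ, ENNReal.ofReal (rn θ * K (sInv θ t - sobs)) with hHdef
  have hθt_meas : ∀ t, Measurable fun θ => rn θ * K (sInv θ t - sobs) := by
    intro t
    exact hrn_meas.mul (hK_meas.comp
      ((hsInv_meas.comp (measurable_id.prodMk measurable_const)).sub measurable_const))
  have hθt0 : ∀ t θ, 0 ≤ rn θ * K (sInv θ t - sobs) := fun t θ =>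
    mul_nonneg (hrn_nonneg θ) (hK_nonneg _)
  -- key lintegral identity
  have key : ∫⁻ q, ENNReal.ofReal (F q) =
      ∫⁻ t, (A.indicator (fun t => ENNReal.ofReal (g t)) t) * H t := by
    rw [Measure.volume_eq_prod, lintegral_prod _ hF_meas.ennreal_ofReal.aemeasurable]
    have inner : ∀ θ, ∫⁻ s, ENNReal.ofReal (F (θ, s)) = ∫⁻ t, ENNReal.ofReal (ψ θ t) := by
      intro θ
      have hTθ : Measurable (T θ) := hT_meas.comp measurable_prodMk_left
      have hhθ : Measurable fun s => F (θ, s) := hF_meas.comp measurable_prodMk_left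
      refine cov_lintegral T sInv J θ hTθ (hJ_nonneg θ) (hInv₁ θ) (hCOV θ)
        _ _ hhθ (fun s => hF0 (θ, s))
        (hψ_measp.comp measurable_prodMk_left) (hψ0 θ) ?_
      intro t
      show _ = A.indicator (fun _ => (1 : ℝ)) t * g t * (rn θ * K (sInv θ t - sobs))
      rw [hFeq θ (sInv θ t), hInv₁ θ t, ← hJac θ t]
      ring
    simp_rw [inner]
    rw [lintegral_lintegral_swap hψ_measp.ennreal_ofReal.aemeasurable]
    congr 1
    funext t
    have hsplit : ∀ θ, ENNReal.ofReal (ψ θ t) =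
        ENNReal.ofReal (A.indicator (fun _ => (1 : ℝ)) t * g t) *
          ENNReal.ofReal (rn θ * K (sInv θ t - sobs)) := by
      intro θ
      rw [hψ, ENNReal.ofReal_mul
        (mul_nonneg (Set.indicator_nonneg (fun _ _ => zero_le_one) t) (hg_nonneg t))]
    simp_rw [hsplit]
    rw [lintegral_const_mul' _ _ ENNReal.ofReal_ne_top]
    congr 1
    by_cases hmem : t ∈ A <;> simp [Set.indicator_apply, hmem]
  -- each H t is either ofReal C or ⊤
  have hH : ∀ t, H t = ENNReal.ofReal C ∨ H t = ⊤ := by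
    intro t
    rcases eq_or_ne (H t) ⊤ with ht | ht
    · exact Or.inr ht
    · left
      have hint : Integrable (fun θ => rn θ * K (sInv θ t - sobs)) :=
        ⟨(hθt_meas t).aestronglyMeasurable,
          (hasFiniteIntegral_iff_ofReal (ae_of_all _ (hθt0 t))).2 (lt_top_iff_ne_top.2 ht)⟩
      rw [← hC t]
      exact (MeasureTheory.ofReal_integral_eq_lintegral_ofReal hint
        (ae_of_all _ (hθt0 t))).symm
  have hLHS : (∫ q, F q) = (∫⁻ q, ENNReal.ofReal (F q)).toReal :=
    integral_eq_lintegral_of_nonneg_ae (ae_of_all _ hF0) hF_meas.aestronglyMeasurable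
  -- H measurable (needed in the C = 0 case)
  have hH_meas : Measurable H := by
    apply Measurable.lintegral_prod_left
    exact ((hrn_meas.comp measurable_fst).mul
      (hK_meas.comp (hsInv_meas.sub measurable_const))).ennreal_ofReal
  rcases eq_or_lt_of_le hC0 with hCeq | hCpos
  · -- C = 0
    rw [← hCeq, zero_mul, hLHS, key]
    set k : (Fin d → ℝ) → ENNReal := fun t =>
      A.indicator (fun t => ENNReal.ofReal (g t)) t * H t with hk
    have hk_meas : Measurable k :=
      ((hg_meas.ennreal_ofReal).indicator hA).mul hH_meas
    have hk01 : ∀ t, k t = 0 ∨ k t = ⊤ := by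
      intro t
      rcases hH t with h | h
      · left; rw [hk]; simp only [h, ← hCeq, ENNReal.ofReal_zero, mul_zero]
      · rcases eq_or_ne (A.indicator (fun t => ENNReal.ofReal (g t)) t) 0 with h2 | h2
        · left; rw [hk]; simp only [h2, zero_mul]
        · right; rw [hk]; simp only [h]; exact ENNReal.mul_top h2
    rcases eq_or_ne (∫⁻ t, k t) ⊤ with htop | htop
    · rw [htop]; simp
    · have hae : ∀ᵐ t, k t = 0 := by
        filter_upwards [ae_lt_top hk_meas htop] with t ht
        exact (hk01 t).resolve_right (ne_top_of_lt ht)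
      rw [lintegral_congr_ae hae, lintegral_zero]
      simp
  · -- C > 0
    have hHC : ∀ t, H t = ENNReal.ofReal C := by
      intro t
      refine (hH t).resolve_right fun htop => ?_
      have hnotint : ¬ Integrable (fun θ => rn θ * K (sInv θ t - sobs)) := by
        intro hint
        have h2 := (hasFiniteIntegral_iff_ofReal (ae_of_all _ (hθt0 t))).1 hint.2
        exact absurd htop h2.ne
      have h0 := integral_undef hnotint
      rw [hC t] at h0
      exact absurd h0 (ne_of_gt hCpos)
    rw [hLHS, key]
    simp_rw [hHC]
    rw [lintegral_mul_const' _ _ ENNReal.ofReal_ne_top, ENNReal.toReal_mul,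
      ENNReal.toReal_ofReal hC0, mul_comm]
    congr 1
    rw [lintegral_indicator hA _]
    exact (integral_eq_lintegral_of_nonneg_ae (ae_of_all _ hg_nonneg)
      hg_meas.aestronglyMeasurable).symm
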